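/- Let μ_1,...,μ_N ∈ P_p(ℝ^d) and ν ∈ P_p(ℝ^d), and for each i let π_i be a coupling of ν and μ_i. Then there exists γ ∈ Π(μ_1,...,μ_N) (a coupling of the μ_i obtained by gluing the π_i along ν) such that ∫ c(x_1,...,x_N) dγ ≤ Σ_{i=1}^N ∫ |y - x_i|^p dπ_i. Consequently C(μ_1,...,μ_N) ≤ Σ_{i=1}^N W_p^p(ν, μ_i) for every ν, hence C(μ_1,...,μ_N) ≤ WB(μ_1,...,μ_N). -/

import Mathlib

open scoped BigOperators ENNReal
open MeasureTheory

/-- `p`-Wasserstein cost (to the `p`-th power), as an infimum over couplings. -/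
noncomputable def Wpp (p : ℝ) (d : ℕ)
    (α β : Measure (EuclideanSpace ℝ (Fin d))) : ℝ≥0∞ :=
  ⨅ π ∈ {π : Measure (EuclideanSpace ℝ (Fin d) × EuclideanSpace ℝ (Fin d)) |
      π.map Prod.fst = α ∧ π.map Prod.snd = β},
    ∫⁻ q, ENNReal.ofReal (‖q.1 - q.2‖ ^ p) ∂π

section KernelPi

open ProbabilityTheory

variable {β : Type*} [MeasurableSpace β] {ι : Type*} [Fintype ι]
  {α : ι → Type*} [∀ i, MeasurableSpace (α i)]

/-- Product of finitely many Markov kernels with the same source. -/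
noncomputable def myKernelPi (κ : ∀ i, Kernel β (α i)) [∀ i, IsMarkovKernel (κ i)] :
    Kernel β (∀ i, α i) where
  toFun y := Measure.pi fun i => κ i y
  measurable' := by
    refine Measure.measurable_of_measurable_coe _ fun s hs => ?_
    refine MeasurableSpace.induction_on_inter
      (C := fun s _ => Measurable fun y => Measure.pi (fun i => κ i y) s)
      generateFrom_pi.symm isPiSystem_pi ?_ ?_ ?_ ?_ _ hs
    · simp only [measure_empty]; exact measurable_const
    · rintro _ ⟨t, ht, rfl⟩
      simp only [Measure.pi_pi]
      exact Finset.measurable_prod _ fun i _ =>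
        (κ i).measurable_coe (ht i (Set.mem_univ i))
    · intro t htm ih
      have : ∀ y, Measure.pi (fun i => κ i y) tᶜ = 1 - Measure.pi (fun i => κ i y) t := by
        intro y
        have h1 : Measure.pi (fun i => κ i y) Set.univ = 1 := measure_univ
        rw [measure_compl htm (measure_ne_top _ _), h1]
      simp_rw [this]
      exact Measurable.const_sub ih 1
    · intro f hdisj hfm ih
      have : ∀ y, Measure.pi (fun i => κ i y) (⋃ n, f n)
          = ∑' n, Measure.pi (fun i => κ i y) (f n) := fun y =>
        measure_iUnion hdisj hfm
      simp_rw [this]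
      exact Measurable.ennreal_tsum ih

@[simp] lemma myKernelPi_apply (κ : ∀ i, Kernel β (α i)) [∀ i, IsMarkovKernel (κ i)]
    (y : β) : myKernelPi κ y = Measure.pi fun i => κ i y := rfl

instance (κ : ∀ i, Kernel β (α i)) [∀ i, IsMarkovKernel (κ i)] :
    IsMarkovKernel (myKernelPi κ) :=
  ⟨fun y => by rw [myKernelPi_apply]; infer_instance⟩

end KernelPi

section Glue

open ProbabilityTheory

/-- Gluing lemma: given couplings `σ i` of `ν` with `μ i`, there is a multimarginal
coupling `γ` with the required cost bound. -/
lemma glue_lemma (p : ℝ) (hp0 : 0 ≤ p) (d N : ℕ)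
    (μ : Fin N → Measure (EuclideanSpace ℝ (Fin d)))
    (ν : Measure (EuclideanSpace ℝ (Fin d)))
    (hprob : ∀ i, IsProbabilityMeasure (μ i)) (hνprob : IsProbabilityMeasure ν)
    (σ : Fin N → Measure (EuclideanSpace ℝ (Fin d) × EuclideanSpace ℝ (Fin d)))
    (hσ : ∀ i, (σ i).map Prod.fst = ν ∧ (σ i).map Prod.snd = μ i) :
    ∃ γ : Measure (Fin N → EuclideanSpace ℝ (Fin d)),
      IsProbabilityMeasure γ ∧ (∀ i, γ.map (fun x => x i) = μ i) ∧
      (∫⁻ x, ENNReal.ofReal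
          (⨅ z : EuclideanSpace ℝ (Fin d), ∑ i, ‖x i - z‖ ^ p) ∂γ) ≤
        ∑ i, ∫⁻ q, ENNReal.ofReal (‖q.1 - q.2‖ ^ p) ∂(σ i) := by
  set E := EuclideanSpace ℝ (Fin d)
  haveI hσp : ∀ i, IsProbabilityMeasure (σ i) := by
    intro i
    constructor
    have h := (hσ i).1
    have h2 : (σ i).map Prod.fst Set.univ = ν Set.univ := by rw [h]
    rw [Measure.map_apply measurable_fst MeasurableSet.univ, Set.preimage_univ] at h2
    rw [h2, hνprob.measure_univ]
  set κ : Fin N → Kernel E E := fun i => (σ i).condKernel with hκ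
  have hσeq : ∀ i, ν ⊗ₘ κ i = σ i := by
    intro i
    have h := (σ i).disintegrate (σ i).condKernel
    have hfst : (σ i).fst = ν := (hσ i).1
    rw [hfst] at h
    exact h
  set K : Kernel E (Fin N → E) := myKernelPi κ with hK
  set γ : Measure (Fin N → E) := (ν ⊗ₘ K).map Prod.snd with hγ
  haveI : IsProbabilityMeasure (ν ⊗ₘ K) := by infer_instance
  haveI hγp : IsProbabilityMeasure γ := Measure.isProbabilityMeasure_map measurable_snd.aemeasurable
  -- key claim
  have hmeasi : ∀ i : Fin N, Measurable fun q : E × (Fin N → E) => (q.1, q.2 i) :=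
    fun i => measurable_fst.prodMk ((measurable_pi_apply i).comp measurable_snd)
  have key : ∀ i, (ν ⊗ₘ K).map (fun q => (q.1, q.2 i)) = σ i := by
    intro i
    rw [← hσeq i]
    haveI : IsProbabilityMeasure ((ν ⊗ₘ K).map (fun q => (q.1, q.2 i))) :=
      Measure.isProbabilityMeasure_map (hmeasi i).aemeasurable
    refine ext_of_generate_finite _ generateFrom_prod.symm isPiSystem_prod ?_ ?_
    · rintro _ ⟨s, hs, t, ht, rfl⟩
      have hs' : MeasurableSet s := hs
      have ht' : MeasurableSet t := ht
      rw [Measure.map_apply (hmeasi i) (hs'.prod ht')]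
      have hpre : (fun q : E × (Fin N → E) => (q.1, q.2 i)) ⁻¹' (s ×ˢ t)
          = s ×ˢ ((fun x : Fin N → E => x i) ⁻¹' t) := rfl
      rw [hpre, Measure.compProd_apply_prod hs' ((measurable_pi_apply i) ht'),
        Measure.compProd_apply_prod hs' ht']
      have hKy : ∀ y, K y ((fun x : Fin N → E => x i) ⁻¹' t) = κ i y t := by
        intro y
        have hev : (fun x : Fin N → E => x i) ⁻¹' t
            = Set.pi Set.univ (Function.update (fun _ => (Set.univ : Set E)) i t) :=
          Set.eval_preimage
        rw [hK, myKernelPi_apply, hev, Measure.pi_pi]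
        rw [Finset.prod_eq_single i
          (fun j _ hj => by simp [Function.update_of_ne hj]) (by simp)]
        simp
      simp_rw [hKy]
    · simp
  refine ⟨γ, hγp, ?_, ?_⟩
  · intro i
    have h1 : γ.map (fun x => x i) = (ν ⊗ₘ K).map (fun q => q.2 i) := by
      rw [hγ, Measure.map_map (measurable_pi_apply i) measurable_snd]
      rfl
    have h2 : (ν ⊗ₘ K).map (fun q => q.2 i)
        = ((ν ⊗ₘ K).map (fun q => (q.1, q.2 i))).map Prod.snd := by
      rw [Measure.map_map measurable_snd (hmeasi i)]
      rfl
    rw [h1, h2, key i, (hσ i).2]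
  · -- cost bound
    have hcont : ∀ i : Fin N,
        Measurable fun q : E × (Fin N → E) => ENNReal.ofReal (‖q.2 i - q.1‖ ^ p) := by
      intro i
      refine ENNReal.continuous_ofReal.measurable.comp ?_
      have hc : Continuous fun q : E × (Fin N → E) => q.2 i - q.1 := by
        exact Continuous.sub ((continuous_apply i).comp continuous_snd) continuous_fst
      exact (hc.norm.rpow_const (fun x => Or.inr hp0)).measurable
    have hbdd : ∀ x : Fin N → E,
        BddBelow (Set.range fun z : E => ∑ i, ‖x i - z‖ ^ p) := by
      intro x
      refine ⟨0, ?_⟩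
      rintro a ⟨z, rfl⟩
      exact Finset.sum_nonneg fun i _ => Real.rpow_nonneg (norm_nonneg _) p
    calc ∫⁻ x, ENNReal.ofReal (⨅ z : E, ∑ i, ‖x i - z‖ ^ p) ∂γ
        ≤ ∫⁻ q, ENNReal.ofReal (⨅ z : E, ∑ i, ‖q.2 i - z‖ ^ p) ∂(ν ⊗ₘ K) :=
          lintegral_map_le _ Prod.snd
      _ ≤ ∫⁻ q, ∑ i, ENNReal.ofReal (‖q.2 i - q.1‖ ^ p) ∂(ν ⊗ₘ K) := by
          refine lintegral_mono fun q => ?_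
          rw [← ENNReal.ofReal_sum_of_nonneg
            (fun i _ => Real.rpow_nonneg (norm_nonneg _) p)]
          exact ENNReal.ofReal_le_ofReal (ciInf_le (hbdd q.2) q.1)
      _ = ∑ i, ∫⁻ q, ENNReal.ofReal (‖q.2 i - q.1‖ ^ p) ∂(ν ⊗ₘ K) :=
          lintegral_finset_sum _ fun i _ => hcont i
      _ = ∑ i, ∫⁻ q, ENNReal.ofReal (‖q.1 - q.2‖ ^ p) ∂(σ i) := by
          refine Finset.sum_congr rfl fun i _ => ?_
          rw [← key i, lintegral_map ?_ (hmeasi i)]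
          · simp_rw [norm_sub_rev]; rfl
          · refine ENNReal.continuous_ofReal.measurable.comp ?_
            exact ((continuous_fst.sub continuous_snd).norm.rpow_const
              (fun x => Or.inr hp0)).measurable

end Glue

/-- Gluing the couplings `π i` of `ν` and `μ i` along `ν` gives a multi-marginal
coupling `γ` with `∫ c dγ ≤ ∑ i, ∫ ‖y - x‖^p dπ i`; consequently
`C(μ₁,…,μ_N) ≤ ∑ i, W_p^p(ν, μ i)`. -/
theorem multimarginal_cost_le_barycentre_cost
    (p : ℝ) (hp : 1 < p) (d N : ℕ) (hd : 1 ≤ d) (hN : 1 ≤ N)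
    (μ : Fin N → Measure (EuclideanSpace ℝ (Fin d)))
    (ν : Measure (EuclideanSpace ℝ (Fin d)))
    (hprob : ∀ i, IsProbabilityMeasure (μ i)) (hνprob : IsProbabilityMeasure ν)
    (π : Fin N → Measure (EuclideanSpace ℝ (Fin d) × EuclideanSpace ℝ (Fin d)))
    (hπ : ∀ i, (π i).map Prod.fst = ν ∧ (π i).map Prod.snd = μ i) :
    (∃ γ : Measure (Fin N → EuclideanSpace ℝ (Fin d)),
        IsProbabilityMeasure γ ∧ (∀ i, γ.map (fun x => x i) = μ i) ∧
        (∫⁻ x, ENNReal.ofReal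
            (⨅ z : EuclideanSpace ℝ (Fin d), ∑ i, ‖x i - z‖ ^ p) ∂γ) ≤
          ∑ i, ∫⁻ q, ENNReal.ofReal (‖q.1 - q.2‖ ^ p) ∂(π i)) ∧
    (⨅ γ ∈ {γ : Measure (Fin N → EuclideanSpace ℝ (Fin d)) |
        ∀ i, γ.map (fun x => x i) = μ i},
      ∫⁻ x, ENNReal.ofReal
        (⨅ z : EuclideanSpace ℝ (Fin d), ∑ i, ‖x i - z‖ ^ p) ∂γ) ≤
      ∑ i, Wpp p d ν (μ i) := by
  have hp0 : (0 : ℝ) ≤ p := le_of_lt (lt_trans zero_lt_one hp)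
  constructor
  · exact glue_lemma p hp0 d N μ ν hprob hνprob π hπ
  · -- the consequence
    set A := ⨅ γ ∈ {γ : Measure (Fin N → EuclideanSpace ℝ (Fin d)) |
        ∀ i, γ.map (fun x => x i) = μ i},
      ∫⁻ x, ENNReal.ofReal
        (⨅ z : EuclideanSpace ℝ (Fin d), ∑ i, ‖x i - z‖ ^ p) ∂γ with hA
    have hAle : ∀ σ : Fin N →
        Measure (EuclideanSpace ℝ (Fin d) × EuclideanSpace ℝ (Fin d)),
        (∀ i, (σ i).map Prod.fst = ν ∧ (σ i).map Prod.snd = μ i) →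
        A ≤ ∑ i, ∫⁻ q, ENNReal.ofReal (‖q.1 - q.2‖ ^ p) ∂(σ i) := by
      intro σ hσc
      obtain ⟨γ, _, hmarg, hcost⟩ := glue_lemma p hp0 d N μ ν hprob hνprob σ hσc
      exact le_trans (iInf₂_le γ hmarg) hcost
    refine ENNReal.le_of_forall_pos_le_add fun ε hε hfin => ?_
    have hNne : (N : ℝ≥0∞) ≠ 0 := by
      simp only [ne_eq, Nat.cast_eq_zero]
      omega
    have hεN : (0 : ℝ≥0∞) < (ε : ℝ≥0∞) / N :=
      ENNReal.div_pos (by exact_mod_cast hε.ne') (by simp)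
    have hWfin : ∀ i : Fin N, Wpp p d ν (μ i) ≠ ⊤ := by
      intro i
      have := (ENNReal.sum_lt_top.mp hfin) i (Finset.mem_univ i)
      exact this.ne
    have hex : ∀ i : Fin N, ∃ σ :
        Measure (EuclideanSpace ℝ (Fin d) × EuclideanSpace ℝ (Fin d)),
        (σ.map Prod.fst = ν ∧ σ.map Prod.snd = μ i) ∧
        (∫⁻ q, ENNReal.ofReal (‖q.1 - q.2‖ ^ p) ∂σ) ≤ Wpp p d ν (μ i) + ε / N := by
      intro i
      by_contra h
      push_neg at h
      have hle : Wpp p d ν (μ i) + ε / N ≤ Wpp p d ν (μ i) := by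
        rw [Wpp]
        exact le_iInf₂ fun σ hσ => (h σ hσ).le
      have : Wpp p d ν (μ i) < Wpp p d ν (μ i) + ε / N :=
        ENNReal.lt_add_right (hWfin i) hεN.ne'
      exact absurd hle (not_le.mpr this)
    choose σ hσ1 hσ2 using hex
    calc A ≤ ∑ i, ∫⁻ q, ENNReal.ofReal (‖q.1 - q.2‖ ^ p) ∂(σ i) := hAle σ hσ1
      _ ≤ ∑ i, (Wpp p d ν (μ i) + (ε : ℝ≥0∞) / N) :=
          Finset.sum_le_sum fun i _ => hσ2 i
      _ = (∑ i, Wpp p d ν (μ i)) + N * ((ε : ℝ≥0∞) / N) := by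
          rw [Finset.sum_add_distrib, Finset.sum_const, Finset.card_univ,
            Fintype.card_fin, nsmul_eq_mul]
      _ ≤ (∑ i, Wpp p d ν (μ i)) + ε :=
          add_le_add_right ENNReal.mul_div_le _
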